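/- Let X be a Noetherian topological space, f : X → X a continuous surjective map that is also a closed map, and A ⊆ X a closed subset with f⁻¹(A) ⊆ A. Then the image under f of each irreducible component of A is again an irreducible component of A, the induced map on the (finite) set of irreducible components of A is a bijection, and there exists an integer n ≥ 1 such that the n-th iterate fⁿ satisfies fⁿ(Z) = Z for every irreducible component Z of A. (Abstraction of the second assertion of Lemma 2.10 of the paper: after replacing f by some power, h⁻¹(Dᵢ) = Dᵢ for every irreducible component Dᵢ of the invariant divisor D.) -/

import Mathlib

/-- `Z` is an irreducible component of the subset `A`: a maximal irreducible subset
of `A`. -/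
def IsIrredCompOf {X : Type*} [TopologicalSpace X] (Z A : Set X) : Prop :=
  Z ⊆ A ∧ IsIrreducible Z ∧ ∀ Z' : Set X, Z' ⊆ A → IsIrreducible Z' → Z ⊆ Z' → Z' = Z

section Aux

open Set TopologicalSpace

variable {X : Type*} [TopologicalSpace X]

/-- Irreducible components of a closed set are closed. -/
theorem IsIrredCompOf.isClosed' {Z A : Set X} (hA : IsClosed A) (h : IsIrredCompOf Z A) :
    IsClosed Z := by
  obtain ⟨hZA, hZI, hmax⟩ := h
  have h1 : closure Z ⊆ A := hA.closure_subset_iff.2 hZA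
  have h2 := hmax (closure Z) h1 hZI.closure subset_closure
  rw [← h2]; exact isClosed_closure

/-- An irreducible set contained in a finite union of closed sets is contained in one. -/
theorem irr_subset_mem_of_cover {T : Set X} (hT : IsIrreducible T) {S : Set (Set X)}
    (hSfin : S.Finite) (hScl : ∀ t ∈ S, IsClosed t) (hTS : T ⊆ ⋃₀ S) :
    ∃ s ∈ S, T ⊆ s := by
  obtain ⟨s, hs, hTs⟩ := isIrreducible_iff_sUnion_isClosed.1 hT hSfin.toFinset
    (fun z hz => hScl z (hSfin.mem_toFinset.1 hz)) (by rwa [hSfin.coe_toFinset])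
  exact ⟨s, hSfin.mem_toFinset.1 hs, hTs⟩

variable [NoetherianSpace X]

/-- Every irreducible subset of a closed set `A` in a Noetherian space is contained in some
irreducible component of `A`. -/
theorem exists_irredCompOf_superset {A T : Set X} (hA : IsClosed A) (hT : IsIrreducible T)
    (hTA : T ⊆ A) : ∃ Z, IsIrredCompOf Z A ∧ T ⊆ Z := by
  obtain ⟨S, hSfin, hScl, hSirr, hSU⟩ :=
    NoetherianSpace.exists_finite_set_isClosed_irreducible hA
  have hsub : ∀ {T : Set X}, IsIrreducible T → T ⊆ A → ∃ s ∈ S, T ⊆ s := fun hT' hTA' =>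
    irr_subset_mem_of_cover hT' hSfin hScl (hSU ▸ hTA')
  obtain ⟨s, hs, hTs⟩ := hsub hT hTA
  obtain ⟨m, ⟨hmS, hsm⟩, hmax⟩ := Set.Finite.exists_maximalFor id {t ∈ S | s ⊆ t}
    (hSfin.subset (Set.sep_subset _ _)) ⟨s, hs, subset_rfl⟩
  have hmA : m ⊆ A := hSU ▸ Set.subset_sUnion_of_mem hmS
  refine ⟨m, ⟨hmA, hSirr _ hmS, ?_⟩, hTs.trans hsm⟩
  intro Z' hZ'A hZ'I hmZ'
  obtain ⟨t, htS, hZ't⟩ := hsub hZ'I hZ'A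
  have hmt : m = t := le_antisymm (hmZ'.trans hZ't) (hmax (j := t) ⟨htS, hsm.trans (hmZ'.trans hZ't)⟩ (hmZ'.trans hZ't))
  exact (hZ't.trans hmt.ge).antisymm hmZ'

/-- A closed set in a Noetherian space has finitely many irreducible components. -/
theorem finite_irredCompOf {A : Set X} (hA : IsClosed A) :
    {Z : Set X | IsIrredCompOf Z A}.Finite := by
  obtain ⟨S, hSfin, hScl, hSirr, hSU⟩ :=
    NoetherianSpace.exists_finite_set_isClosed_irreducible hA
  refine hSfin.subset ?_
  rintro Z ⟨hZA, hZI, hmax⟩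
  obtain ⟨s, hs, hZs⟩ := irr_subset_mem_of_cover hZI hSfin hScl (hSU ▸ hZA)
  have hsA : s ⊆ A := hSU ▸ Set.subset_sUnion_of_mem hs
  have hsZ : s = Z := hmax s hsA (hSirr s hs) hZs
  rw [← hsZ]; exact hs

/-- For a continuous surjection `f` on a Noetherian space with `f⁻¹(A) ⊆ A`, `A` closed,
we get `f(A) = A`. -/
theorem image_invariant (f : X → X) (hf : Continuous f) (hsurj : Function.Surjective f)
    {A : Set X} (hA : IsClosed A) (hpre : f ⁻¹' A ⊆ A) : f '' A = A := by
  set B : ℕ → Set X := fun n => f^[n] ⁻¹' A with hB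
  have hBc : ∀ n, IsClosed (B n) := fun n => hA.preimage (hf.iterate n)
  have hstep : ∀ n, B (n + 1) = f ⁻¹' (B n) := by
    intro n
    simp only [hB, Function.iterate_succ, Set.preimage_comp]
  have hdesc : ∀ n, B (n + 1) ⊆ B n := by
    intro n
    induction n with
    | zero => rw [hstep 0]; simpa [hB] using hpre
    | succ k ih => rw [hstep (k + 1), hstep k]; exact Set.preimage_mono ih
  have hstab : ∃ N, B (N + 1) = B N := by
    by_contra h
    push_neg at h
    set Bc : ℕ → TopologicalSpace.Closeds X := fun n => ⟨B n, hBc n⟩ with hBcdef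
    have hlt : ∀ n, Bc (n + 1) < Bc n := fun n =>
      lt_of_le_of_ne (hdesc n) (fun e => h n (congrArg TopologicalSpace.Closeds.carrier e))
    have wf : WellFounded ((· < ·) : TopologicalSpace.Closeds X → TopologicalSpace.Closeds X → Prop) :=
      wellFounded_lt
    obtain ⟨n, hn⟩ := wf.min_mem (Set.range Bc) ⟨Bc 0, 0, rfl⟩
    exact wf.not_lt_min (Set.range Bc) ⟨n + 1, rfl⟩ (hn ▸ hlt n)
  obtain ⟨N, hN⟩ := hstab
  have hBN : f ⁻¹' (B N) = B N := by rw [← hstep N, hN]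
  have hfBN : f '' (B N) = B N := by
    nth_rewrite 1 [← hBN]
    exact Set.image_preimage_eq _ hsurj
  have hANB : f^[N] '' (B N) = A := Set.image_preimage_eq _ (hsurj.iterate N)
  calc f '' A = f '' (f^[N] '' (B N)) := by rw [hANB]
    _ = f^[N] '' (f '' (B N)) := by
        rw [← Set.image_comp, ← Function.iterate_succ', Function.iterate_succ, Set.image_comp]
    _ = A := by rw [hfBN, hANB]

end Aux

/-- Abstraction of the second assertion of Lemma 2.10: a continuous closed surjective
self-map `f` of a Noetherian space with `f⁻¹(A) ⊆ A` for a closed subset `A` permutes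
the irreducible components of `A`, and some iterate `fⁿ` (`n ≥ 1`) fixes each of them. -/
theorem iterate_fixes_irreducible_components
    {X : Type*} [TopologicalSpace X] [TopologicalSpace.NoetherianSpace X]
    (f : X → X) (hf : Continuous f) (hsurj : Function.Surjective f)
    (hclosed : IsClosedMap f)
    (A : Set X) (hA : IsClosed A) (hpre : f ⁻¹' A ⊆ A) :
    (∀ Z : Set X, IsIrredCompOf Z A → IsIrredCompOf (f '' Z) A) ∧
    (∀ Z₁ Z₂ : Set X, IsIrredCompOf Z₁ A → IsIrredCompOf Z₂ A →
      f '' Z₁ = f '' Z₂ → Z₁ = Z₂) ∧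
    (∀ W : Set X, IsIrredCompOf W A → ∃ Z : Set X, IsIrredCompOf Z A ∧ f '' Z = W) ∧
    (∃ n : ℕ, 1 ≤ n ∧ ∀ Z : Set X, IsIrredCompOf Z A → f^[n] '' Z = Z) := by
  classical
  have hfA : f '' A = A := image_invariant f hf hsurj hA hpre
  -- claim 3
  have claim3 : ∀ W : Set X, IsIrredCompOf W A → ∃ Z : Set X, IsIrredCompOf Z A ∧ f '' Z = W := by
    intro W hW
    obtain ⟨hWA, hWI, hWmax⟩ := hW
    have hWcl : IsClosed W := IsIrredCompOf.isClosed' hA ⟨hWA, hWI, hWmax⟩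
    have hBA : f ⁻¹' W ⊆ A := (Set.preimage_mono hWA).trans hpre
    have hBcl : IsClosed (f ⁻¹' W) := hWcl.preimage hf
    obtain ⟨S, hSfin, hScl, hSirr, hSU⟩ :=
      TopologicalSpace.NoetherianSpace.exists_finite_set_isClosed_irreducible hBcl
    have hWU : W ⊆ ⋃₀ (Set.image f '' S) := by
      rw [← Set.image_sUnion, ← hSU, Set.image_preimage_eq W hsurj]
    obtain ⟨w, hw, hWw⟩ := irr_subset_mem_of_cover hWI (hSfin.image _)
      (by rintro t ⟨s, hsS, rfl⟩; exact hclosed s (hScl s hsS)) hWU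
    obtain ⟨s, hsS, rfl⟩ := hw
    have hfsW : f '' s ⊆ W := by
      have : f '' s ⊆ f '' (f ⁻¹' W) :=
        Set.image_mono (hSU ▸ Set.subset_sUnion_of_mem hsS)
      rwa [Set.image_preimage_eq W hsurj] at this
    have hsA : s ⊆ A := (hSU ▸ Set.subset_sUnion_of_mem hsS).trans hBA
    obtain ⟨Z, hZcomp, hsZ⟩ := exists_irredCompOf_superset hA (hSirr s hsS) hsA
    have hfZA : f '' Z ⊆ A := hfA ▸ Set.image_mono hZcomp.1
    have hfZirr : IsIrreducible (f '' Z) := hZcomp.2.1.image f hf.continuousOn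
    have hWfZ : W ⊆ f '' Z := hWw.trans (Set.image_mono hsZ)
    exact ⟨Z, hZcomp, hWmax (f '' Z) hfZA hfZirr hWfZ⟩
  -- finiteness of the set of components
  have hCfin : {Z : Set X | IsIrredCompOf Z A}.Finite := finite_irredCompOf hA
  haveI : Finite ↥{Z : Set X | IsIrredCompOf Z A} := hCfin.to_subtype
  -- claim 1 via a counting argument
  have claim3' := claim3
  choose g hg1 hg2 using claim3'
  set C := {Z : Set X | IsIrredCompOf Z A} with hC
  let G : ↥C → ↥C := fun W => ⟨g W.1 W.2, hg1 W.1 W.2⟩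
  have hGinj : Function.Injective G := by
    intro W₁ W₂ h
    have h' : g W₁.1 W₁.2 = g W₂.1 W₂.2 := congrArg Subtype.val h
    apply Subtype.ext
    rw [← hg2 W₁.1 W₁.2, ← hg2 W₂.1 W₂.2, h']
  have hGsurj : Function.Surjective G := Finite.injective_iff_surjective.1 hGinj
  have claim1 : ∀ Z : Set X, IsIrredCompOf Z A → IsIrredCompOf (f '' Z) A := by
    intro Z hZ
    obtain ⟨W, hW⟩ := hGsurj ⟨Z, hZ⟩
    have h' : g W.1 W.2 = Z := congrArg Subtype.val hW
    have := hg2 W.1 W.2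
    rw [h'] at this
    rw [this]
    exact W.2
  -- claim 2
  let H : ↥C → ↥C := fun Z => ⟨f '' Z.1, claim1 Z.1 Z.2⟩
  have hHsurj : Function.Surjective H := by
    rintro ⟨W, hW⟩
    obtain ⟨Z, hZ, hfZ⟩ := claim3 W hW
    exact ⟨⟨Z, hZ⟩, Subtype.ext hfZ⟩
  have hHinj : Function.Injective H := Finite.injective_iff_surjective.2 hHsurj
  have claim2 : ∀ Z₁ Z₂ : Set X, IsIrredCompOf Z₁ A → IsIrredCompOf Z₂ A →
      f '' Z₁ = f '' Z₂ → Z₁ = Z₂ := by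
    intro Z₁ Z₂ h₁ h₂ h
    have := hHinj (a₁ := ⟨Z₁, h₁⟩) (a₂ := ⟨Z₂, h₂⟩) (Subtype.ext h)
    exact congrArg Subtype.val this
  refine ⟨claim1, claim2, claim3, ?_⟩
  -- claim 4 : some iterate fixes every component
  let e : Equiv.Perm ↥C := Equiv.ofBijective H ⟨hHinj, hHsurj⟩
  have hepow : ∀ k : ℕ, ∀ x : ↥C, ((e ^ k) x : Set X) = f^[k] '' x.1 := by
    intro k
    induction k with
    | zero => intro x; simp
    | succ m ih =>
      intro x
      rw [pow_succ, Equiv.Perm.mul_apply, ih]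
      have hex : ((e x : ↥C) : Set X) = f '' x.1 := rfl
      rw [hex, Function.iterate_succ, Set.image_comp]
  refine ⟨orderOf e, orderOf_pos e, ?_⟩
  intro Z hZ
  have := hepow (orderOf e) ⟨Z, hZ⟩
  rw [pow_orderOf_eq_one e] at this
  simpa using this.symm
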